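/- Let K be a field and F ∈ K[[x]][y] a monic polynomial that is irreducible in K[[x]][y]. Then the Newton polygon of F is straight, i.e., the lower convex hull of the points (i, val(a_i)) for F = Σ_{i=0}^d a_i(x) y^i consists of a single edge (or a single point). -/

import Mathlib

open Polynomial

namespace NPAux
variable {K : Type*} [Field K]

/-- `ZMod r`-grading predicate: all exponents `j` in the support satisfy `s*j = γ`. -/
def HHom (r s : ℕ) (γ : ZMod r) (p : Polynomial K) : Prop :=
  ∀ j : ℕ, p.coeff j ≠ 0 → ((s : ZMod r) * (j : ZMod r) = γ)

/-- projection onto the `γ`-graded piece -/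
noncomputable def hproj (r s : ℕ) (γ : ZMod r) (p : Polynomial K) : Polynomial K :=
  ∑ j ∈ Finset.range (p.natDegree + 1),
    if ((s : ZMod r) * (j : ZMod r) = γ) then Polynomial.monomial j (p.coeff j) else 0

theorem hproj_coeff (r s : ℕ) (γ : ZMod r) (p : Polynomial K) (m : ℕ) :
    (hproj r s γ p).coeff m = if ((s : ZMod r) * (m : ZMod r) = γ) then p.coeff m else 0 := by
  rw [hproj, Polynomial.finset_sum_coeff]
  by_cases hm : m ≤ p.natDegree
  · rw [Finset.sum_eq_single m]
    · split_ifs with h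
      · rw [coeff_monomial, if_pos rfl]
      · simp
    · intro b _ hbm
      split_ifs with h
      · rw [coeff_monomial, if_neg hbm]
      · simp
    · intro hmem
      exact absurd (Finset.mem_range.2 (Nat.lt_succ_of_le hm)) hmem
  · push_neg at hm
    rw [Finset.sum_eq_zero, p.coeff_eq_zero_of_natDegree_lt hm, ite_self]
    intro b hb
    split_ifs with h
    · rw [coeff_monomial, if_neg]
      simp only [Finset.mem_range] at hb
      omega
    · simp

theorem hhom_hproj (r s : ℕ) (γ : ZMod r) (p : Polynomial K) : HHom r s γ (hproj r s γ p) := by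
  intro j hj
  rw [hproj_coeff] at hj
  by_contra h
  rw [if_neg h] at hj
  exact hj rfl

theorem hproj_eq_self {r s : ℕ} {γ : ZMod r} {p : Polynomial K} (h : HHom r s γ p) :
    hproj r s γ p = p := by
  ext m
  rw [hproj_coeff]
  split_ifs with hc
  · rfl
  · by_contra hne
    exact hc (h m fun h0 => hne h0.symm)

theorem hproj_natDegree_le (r s : ℕ) (γ : ZMod r) (p : Polynomial K) :
    (hproj r s γ p).natDegree ≤ p.natDegree := by
  apply Polynomial.natDegree_le_iff_coeff_eq_zero.2
  intro m hm
  rw [hproj_coeff]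
  split_ifs with hc
  · exact p.coeff_eq_zero_of_natDegree_lt hm
  · rfl

theorem hproj_add (r s : ℕ) (γ : ZMod r) (p q : Polynomial K) :
    hproj r s γ (p + q) = hproj r s γ p + hproj r s γ q := by
  ext m
  simp only [hproj_coeff, Polynomial.coeff_add]
  split_ifs <;> simp

theorem HHom.sub {r s : ℕ} {γ : ZMod r} {p q : Polynomial K} (hp : HHom r s γ p)
    (hq : HHom r s γ q) : HHom r s γ (p - q) := by
  intro j hj
  rw [Polynomial.coeff_sub] at hj
  rcases ne_or_eq (p.coeff j) 0 with h | h
  · exact hp j h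
  · exact hq j (by rw [h, zero_sub, neg_ne_zero] at hj; exact hj)

theorem HHom.mul {r s : ℕ} {γ δ : ZMod r} {p q : Polynomial K} (hp : HHom r s γ p)
    (hq : HHom r s δ q) : HHom r s (γ + δ) (p * q) := by
  intro j hj
  rw [Polynomial.coeff_mul] at hj
  obtain ⟨⟨u, v⟩, hmem, hne⟩ := Finset.exists_ne_zero_of_sum_ne_zero hj
  have hu : p.coeff u ≠ 0 := fun h => hne (by rw [h, zero_mul])
  have hv : q.coeff v ≠ 0 := fun h => hne (by rw [h, mul_zero])
  have := Finset.HasAntidiagonal.mem_antidiagonal.1 hmem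
  rcases this with rfl
  push_cast
  rw [mul_add, hp u hu, hq v hv]

theorem hhom_sum {r s : ℕ} {γ : ZMod r} {ι : Type*} (t : Finset ι) (f : ι → Polynomial K)
    (h : ∀ i ∈ t, HHom r s γ (f i)) : HHom r s γ (∑ i ∈ t, f i) := by
  intro j hj
  rw [Polynomial.finset_sum_coeff] at hj
  obtain ⟨u, hu, hne⟩ := Finset.exists_ne_zero_of_sum_ne_zero hj
  exact h u hu j hne

theorem hproj_mul_right {r s : ℕ} {γ δ : ZMod r} (p : Polynomial K) {q : Polynomial K}
    (hq : HHom r s δ q) : hproj r s (γ + δ) (p * q) = hproj r s γ p * q := by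
  ext i
  rw [hproj_coeff, Polynomial.coeff_mul, Polynomial.coeff_mul]
  rw [show (if ((s : ZMod r) * (i : ZMod r) = γ + δ) then
      ∑ x ∈ Finset.HasAntidiagonal.antidiagonal i, p.coeff x.1 * q.coeff x.2 else 0) =
      ∑ x ∈ Finset.HasAntidiagonal.antidiagonal i, (if ((s : ZMod r) * (i : ZMod r) = γ + δ) then
        p.coeff x.1 * q.coeff x.2 else 0) from by split_ifs <;> simp]
  apply Finset.sum_congr rfl
  rintro ⟨u, v⟩ hmem
  have huv : u + v = i := Finset.HasAntidiagonal.mem_antidiagonal.1 hmem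
  rw [hproj_coeff]
  rcases eq_or_ne (q.coeff v) 0 with hv | hv
  · simp [hv]
  · have hδ := hq v hv
    have hcast : (s : ZMod r) * (i : ZMod r) = (s : ZMod r) * (u : ZMod r) + δ := by
      rw [← hδ, ← huv]; push_cast; ring
    by_cases hc : (s : ZMod r) * (u : ZMod r) = γ
    · rw [if_pos (by rw [hcast, hc]), if_pos hc]
    · rw [if_neg (fun h => hc (by
        have := hcast.symm.trans h
        exact add_right_cancel this)), if_neg hc, zero_mul]

variable (r s k : ℕ)

/-- the Hensel-type recursive sequence of pairs `(gₙ, hₙ)` -/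
noncomputable def hseq (δ : ZMod r) (h₀ Q : Polynomial K) (f : ℕ → Polynomial K) :
    ℕ → Polynomial K × Polynomial K
  | 0 => (X ^ k, h₀)
  | (n+1) =>
    let c := f (n+1) - ∑ j ∈ (Finset.range n).attach,
      (hseq δ h₀ Q f (j.1+1)).1 * (hseq δ h₀ Q f (n-j.1)).2
    let g' := (c * Q) %ₘ (X ^ k)
    let h' := (c - h₀ * g') /ₘ (X ^ k)
    (hproj r s (((n+1 : ℕ) : ZMod r) + (s : ZMod r) * (k : ZMod r)) g',
     hproj r s (((n+1 : ℕ) : ZMod r) + δ) h')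
  decreasing_by
  · exact Nat.succ_lt_succ (Finset.mem_range.1 j.2)
  · exact Nat.lt_succ_of_le (Nat.sub_le n j.1)

/-- the correction term -/
noncomputable def cseq (δ : ZMod r) (h₀ Q : Polynomial K) (f : ℕ → Polynomial K) (n : ℕ) :
    Polynomial K :=
  f (n+1) - ∑ j ∈ Finset.range n,
      (hseq r s k δ h₀ Q f (j+1)).1 * (hseq r s k δ h₀ Q f (n-j)).2

theorem cseq_eq (δ : ZMod r) (h₀ Q : Polynomial K) (f : ℕ → Polynomial K) (n : ℕ) :
    cseq r s k δ h₀ Q f n = f (n+1) - ∑ j ∈ (Finset.range n).attach,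
      (hseq r s k δ h₀ Q f (j.1+1)).1 * (hseq r s k δ h₀ Q f (n-j.1)).2 := by
  rw [cseq, ← Finset.sum_attach (Finset.range n)
    (fun j => (hseq r s k δ h₀ Q f (j+1)).1 * (hseq r s k δ h₀ Q f (n-j)).2)]

theorem hseq_zero (δ : ZMod r) (h₀ Q : Polynomial K) (f : ℕ → Polynomial K) :
    hseq r s k δ h₀ Q f 0 = (X ^ k, h₀) := by
  rw [hseq]

theorem hseq_succ (δ : ZMod r) (h₀ Q : Polynomial K) (f : ℕ → Polynomial K) (n : ℕ) :
    hseq r s k δ h₀ Q f (n+1) =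
      (hproj r s (((n+1 : ℕ) : ZMod r) + (s : ZMod r) * (k : ZMod r))
        ((cseq r s k δ h₀ Q f n * Q) %ₘ (X ^ k)),
       hproj r s (((n+1 : ℕ) : ZMod r) + δ)
        ((cseq r s k δ h₀ Q f n - h₀ * ((cseq r s k δ h₀ Q f n * Q) %ₘ (X ^ k))) /ₘ (X ^ k))) := by
  rw [hseq, cseq_eq]

theorem natDegree_lt_of_coeff_eq_zero {p : Polynomial K} {d : ℕ} (hle : p.natDegree ≤ d)
    (h0 : 0 < d) (hc : p.coeff d = 0) : p.natDegree < d := by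
  rcases eq_or_ne p 0 with rfl | hp
  · simpa using h0
  · refine lt_of_le_of_ne hle fun h => ?_
    exact hp (Polynomial.leadingCoeff_eq_zero.1 (by rwa [Polynomial.leadingCoeff, h]))

theorem hseq_spec (d : ℕ) (δ : ZMod r) (h₀ P Q : Polynomial K)
    (f : ℕ → Polynomial K)
    (hk1 : 0 < k) (hkd : k < d)
    (hf0 : X ^ k * h₀ = f 0)
    (hdh₀ : h₀.natDegree = d - k)
    (hδ : HHom r s δ h₀)
    (hPQ : P * X ^ k + Q * h₀ = 1)
    (hfdeg : ∀ n : ℕ, (f n).natDegree ≤ d)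
    (hfd : ∀ n : ℕ, 0 < n → (f n).coeff d = 0)
    (hfhom : ∀ n : ℕ, HHom r s (((n : ℕ) : ZMod r) + ((s : ZMod r) * (k : ZMod r) + δ)) (f n)) :
    ∀ n : ℕ,
      HHom r s (((n : ℕ) : ZMod r) + (s : ZMod r) * (k : ZMod r)) (hseq r s k δ h₀ Q f n).1 ∧
      HHom r s (((n : ℕ) : ZMod r) + δ) (hseq r s k δ h₀ Q f n).2 ∧
      (0 < n → ((hseq r s k δ h₀ Q f n).1).natDegree < k) ∧
      ((hseq r s k δ h₀ Q f n).2).natDegree ≤ d - k ∧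
      (0 < n → ((hseq r s k δ h₀ Q f n).2).natDegree < d - k) ∧
      (∑ m ∈ Finset.range (n+1),
        (hseq r s k δ h₀ Q f m).1 * (hseq r s k δ h₀ Q f (n - m)).2 = f n) := by
  have hXk : (X ^ k : Polynomial K).Monic := monic_X_pow k
  have hXkdeg : (X ^ k : Polynomial K).natDegree = k := natDegree_X_pow k
  have hXk1 : (X ^ k : Polynomial K) ≠ 1 := fun h => by
    have := congrArg natDegree h
    rw [hXkdeg, natDegree_one] at this
    omega
  have hXhom : HHom r s ((s : ZMod r) * (k : ZMod r)) (X ^ k : Polynomial K) := by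
    intro j hj
    rw [Polynomial.coeff_X_pow] at hj
    rcases eq_or_ne j k with rfl | hne
    · rfl
    · exact absurd (if_neg hne) hj
  intro n
  induction n using Nat.strong_induction_on with
  | _ n IH =>
  cases n with
  | zero =>
    rw [hseq_zero]
    refine ⟨by simpa using hXhom, by simpa using hδ, by omega, le_of_eq hdh₀, by omega, ?_⟩
    rw [Finset.sum_range_one, hseq_zero]
    simpa using hf0
  | succ n =>
    -- abbreviations
    set c : Polynomial K := cseq r s k δ h₀ Q f n with hcdef
    set g' : Polynomial K := (c * Q) %ₘ (X ^ k) with hg'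
    set t : Polynomial K := (c * Q) /ₘ (X ^ k) with ht
    set h'' : Polynomial K := (c - h₀ * g') /ₘ (X ^ k) with hh''
    have hgn1 : (hseq r s k δ h₀ Q f (n+1)).1 =
        hproj r s (((n+1 : ℕ) : ZMod r) + (s : ZMod r) * (k : ZMod r)) g' := by
      rw [hseq_succ]
    have hhn1 : (hseq r s k δ h₀ Q f (n+1)).2 =
        hproj r s (((n+1 : ℕ) : ZMod r) + δ) h'' := by
      rw [hseq_succ]
    -- homogeneity of c
    have hchom : HHom r s (((n+1 : ℕ) : ZMod r) + ((s : ZMod r) * (k : ZMod r) + δ)) c := by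
      rw [hcdef, cseq]
      refine (hfhom (n+1)).sub (hhom_sum _ _ ?_)
      intro j hj
      have hjn := Finset.mem_range.1 hj
      have h1 := (IH (j+1) (by omega)).1
      have h2 := (IH (n-j) (by omega)).2.1
      have hmul := h1.mul h2
      have hcast : ((j+1 : ℕ) : ZMod r) + ((n - j : ℕ) : ZMod r) = ((n+1 : ℕ) : ZMod r) := by
        rw [← Nat.cast_add]
        congr 1
        omega
      convert hmul using 1
      rw [← hcast]
      ring
    -- the exact division
    have hgt : X ^ k * t = c * Q - g' := by
      have h := Polynomial.modByMonic_add_div (c * Q) (X ^ k)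
      rw [← hg', ← ht] at h
      rw [← h]
      ring
    have hdvd : c - h₀ * g' = X ^ k * (c * P + h₀ * t) := by
      have : h₀ * (X ^ k * t) = h₀ * (c * Q - g') := by rw [hgt]
      linear_combination -this - c * hPQ
    have hXh : X ^ k * h'' = c - h₀ * g' := by
      have hd : X ^ k ∣ (c - h₀ * g') := ⟨c * P + h₀ * t, hdvd⟩
      have hz : (c - h₀ * g') %ₘ (X ^ k) = 0 := (Polynomial.modByMonic_eq_zero_iff_dvd hXk).2 hd
      have h := Polynomial.modByMonic_add_div (c - h₀ * g') (X ^ k)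
      rw [hz, zero_add, ← hh''] at h
      exact h
    have hkey : X ^ k * (hseq r s k δ h₀ Q f (n+1)).2 + h₀ * (hseq r s k δ h₀ Q f (n+1)).1 = c := by
      have hungr : h'' * X ^ k + g' * h₀ = c := by
        rw [mul_comm h'' (X ^ k), mul_comm g' h₀, hXh]
        ring
      have hp := congrArg (hproj r s (((n+1 : ℕ) : ZMod r) + ((s : ZMod r) * (k : ZMod r) + δ))) hungr
      rw [hproj_add, hproj_eq_self hchom] at hp
      have e1 : hproj r s (((n+1 : ℕ) : ZMod r) + ((s : ZMod r) * (k : ZMod r) + δ)) (h'' * X ^ k)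
          = hproj r s (((n+1 : ℕ) : ZMod r) + δ) h'' * X ^ k := by
        rw [show (((n+1 : ℕ) : ZMod r) + ((s : ZMod r) * (k : ZMod r) + δ)) =
          ((((n+1 : ℕ) : ZMod r) + δ) + (s : ZMod r) * (k : ZMod r)) from by ring]
        exact hproj_mul_right _ hXhom
      have e2 : hproj r s (((n+1 : ℕ) : ZMod r) + ((s : ZMod r) * (k : ZMod r) + δ)) (g' * h₀)
          = hproj r s (((n+1 : ℕ) : ZMod r) + (s : ZMod r) * (k : ZMod r)) g' * h₀ := by
        rw [show (((n+1 : ℕ) : ZMod r) + ((s : ZMod r) * (k : ZMod r) + δ)) =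
          ((((n+1 : ℕ) : ZMod r) + (s : ZMod r) * (k : ZMod r)) + δ) from by ring]
        exact hproj_mul_right _ hδ
      rw [e1, e2] at hp
      rw [hgn1, hhn1]
      rw [mul_comm (X ^ k), mul_comm h₀]
      exact hp
    -- degree bounds
    have hdegg' : g'.natDegree < k := by
      have := Polynomial.natDegree_modByMonic_lt (c * Q) hXk hXk1
      rwa [hXkdeg] at this
    have hdeggn1 : ((hseq r s k δ h₀ Q f (n+1)).1).natDegree < k := by
      rw [hgn1]
      exact lt_of_le_of_lt (hproj_natDegree_le _ _ _ _) hdegg'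
    have hdegc : c.natDegree ≤ d - 1 := by
      rw [hcdef, cseq]
      apply le_trans (Polynomial.natDegree_sub_le _ _)
      apply max_le
      · have := natDegree_lt_of_coeff_eq_zero (hfdeg (n+1)) (by omega) (hfd (n+1) (by omega))
        omega
      · apply Polynomial.natDegree_sum_le_of_forall_le
        intro j hj
        have hjn := Finset.mem_range.1 hj
        have h1 := (IH (j+1) (by omega)).2.2.1 (by omega)
        have h2 := (IH (n-j) (by omega)).2.2.2.1
        apply le_trans (Polynomial.natDegree_mul_le)
        omega
    have hdegh'' : h''.natDegree < d - k := by
      rw [hh'']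
      rw [Polynomial.natDegree_divByMonic _ hXk, hXkdeg]
      have : (c - h₀ * g').natDegree ≤ d - 1 := by
        apply le_trans (Polynomial.natDegree_sub_le _ _)
        apply max_le hdegc
        apply le_trans (Polynomial.natDegree_mul_le)
        omega
      omega
    have hdeghn1 : ((hseq r s k δ h₀ Q f (n+1)).2).natDegree < d - k := by
      rw [hhn1]
      exact lt_of_le_of_lt (hproj_natDegree_le _ _ _ _) hdegh''
    -- the convolution identity
    have hsum : ∑ m ∈ Finset.range (n+2),
        (hseq r s k δ h₀ Q f m).1 * (hseq r s k δ h₀ Q f (n + 1 - m)).2 = f (n+1) := by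
      rw [Finset.sum_range_succ']
      simp only [Nat.succ_sub_succ, Nat.sub_zero]
      rw [Finset.sum_range_succ]
      have hz : (hseq r s k δ h₀ Q f 0).1 * (hseq r s k δ h₀ Q f (n+1)).2
          = X ^ k * (hseq r s k δ h₀ Q f (n+1)).2 := by rw [hseq_zero]
      have hnn : (hseq r s k δ h₀ Q f (n+1)).1 * (hseq r s k δ h₀ Q f (n - n)).2
          = (hseq r s k δ h₀ Q f (n+1)).1 * h₀ := by
        rw [Nat.sub_self, hseq_zero]
      rw [hz, hnn]
      have : ∑ j ∈ Finset.range n,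
          (hseq r s k δ h₀ Q f (j+1)).1 * (hseq r s k δ h₀ Q f (n - j)).2 = f (n+1) - c := by
        rw [hcdef, cseq]
        ring
      rw [this]
      linear_combination hkey
    exact ⟨by rw [hgn1]; exact hhom_hproj _ _ _ _,
      by rw [hhn1]; exact hhom_hproj _ _ _ _,
      fun _ => hdeggn1,
      le_of_lt hdeghn1,
      fun _ => hdeghn1,
      hsum⟩

theorem key {K : Type*} [Field K] (F : Polynomial (PowerSeries K)) (hF : F.Monic)
    (d i₁ s : ℕ) (hd : F.natDegree = d) (hd0 : 0 < d) (hi₁d : i₁ < d)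
    (hne : PowerSeries.coeff s (F.coeff i₁) ≠ 0)
    (hlow : ∀ i a : ℕ, a * (d - i₁) < s * (d - i) → PowerSeries.coeff a (F.coeff i) = 0)
    (hs0 : ∀ a : ℕ, a * (d - i₁) ≤ s * d → PowerSeries.coeff a (F.coeff 0) = 0) :
    ¬ Irreducible F := by
  classical
  set r : ℕ := d - i₁ with hrdef
  have hr : 0 < r := by omega
  have hi₁0 : 0 < i₁ := by
    rcases Nat.eq_zero_or_pos i₁ with h | h
    · exfalso
      rw [h] at hne
      refine hne (hs0 s ?_)
      have : r ≤ d := by omega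
      exact Nat.mul_le_mul (le_refl s) this
    · exact h
  -- the graded pieces of F
  set f : ℕ → Polynomial K := fun n => ∑ j ∈ Finset.range (d+1),
    if r ∣ (n + s*(d-j)) then
      Polynomial.monomial j (PowerSeries.coeff ((n + s*(d-j))/r) (F.coeff j)) else 0 with hfdef
  have fcoeff : ∀ n j : ℕ, (f n).coeff j =
      if j ≤ d ∧ r ∣ (n + s*(d-j)) then
        PowerSeries.coeff ((n + s*(d-j))/r) (F.coeff j) else 0 := by
    intro n m
    rw [hfdef]
    rw [Polynomial.finset_sum_coeff]
    by_cases hm : m ≤ d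
    · rw [Finset.sum_eq_single m]
      · split_ifs with h1 h2 h2
        · rw [Polynomial.coeff_monomial, if_pos rfl]
        · exact absurd ⟨hm, h1⟩ h2
        · exact absurd h2.2 h1
        · rfl
      · intro b _ hbm
        split_ifs with h1
        · rw [Polynomial.coeff_monomial, if_neg hbm]
        · rfl
      · intro hmem
        exact absurd (Finset.mem_range.2 (by omega)) hmem
    · rw [Finset.sum_eq_zero, if_neg (by omega)]
      intro b hb
      have hbd := Finset.mem_range.1 hb
      split_ifs with h1
      · rw [Polynomial.coeff_monomial, if_neg (by omega)]
      · rfl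
  have hFd : F.coeff d = 1 := by
    have := hF.coeff_natDegree
    rwa [hd] at this
  have hfdeg : ∀ n : ℕ, (f n).natDegree ≤ d := by
    intro n
    apply Polynomial.natDegree_le_iff_coeff_eq_zero.2
    intro m hm
    rw [fcoeff, if_neg (by omega)]
  have hfd : ∀ n : ℕ, 0 < n → (f n).coeff d = 0 := by
    intro n hn
    rw [fcoeff, hFd]
    split_ifs with h1
    · rw [PowerSeries.coeff_one, if_neg]
      obtain ⟨_, ⟨u, hu⟩⟩ := h1
      simp only [Nat.sub_self, Nat.mul_zero, Nat.add_zero] at hu ⊢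
      rw [hu, Nat.mul_div_cancel_left _ hr]
      rintro rfl
      omega
    · rfl
  have hf0d : (f 0).coeff d = 1 := by
    rw [fcoeff, if_pos ⟨le_refl d, by simp⟩]
    simp [hFd]
  have hf00 : (f 0).coeff 0 = 0 := by
    rw [fcoeff]
    split_ifs with h1
    · apply hs0
      calc (0 + s*(d-0))/r * r ≤ 0 + s*(d-0) := Nat.div_mul_le_self _ _
      _ = s * d := by simp
    · rfl
  have hf0i₁ : (f 0).coeff i₁ ≠ 0 := by
    rw [fcoeff, if_pos ⟨by omega, ⟨s, by rw [hrdef]; ring⟩⟩]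
    rw [show (0 + s*(d-i₁))/r = s from by
      rw [Nat.zero_add, show s * (d - i₁) = s * r from by rw [hrdef], Nat.mul_div_cancel _ hr]]
    exact hne
  have hf0ne : f 0 ≠ 0 := fun h => by rw [h] at hf0d; simp at hf0d
  -- the trailing degree
  set k : ℕ := (f 0).natTrailingDegree with hkdef
  have hk1 : 0 < k := by
    rcases Nat.eq_zero_or_pos k with h | h
    · exfalso
      apply hf0ne
      rw [← Polynomial.trailingCoeff_eq_zero]
      rw [Polynomial.trailingCoeff, ← hkdef, h, hf00]
    · exact h
  have hki₁ : k ≤ i₁ := Polynomial.natTrailingDegree_le_of_ne_zero hf0i₁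
  have hkd : k < d := by omega
  -- the cofactor h₀
  set h₀ : Polynomial K := ∑ j ∈ Finset.range (d - k + 1),
    Polynomial.monomial j ((f 0).coeff (j + k)) with hh₀def
  have h0coeff : ∀ j : ℕ, h₀.coeff j = (f 0).coeff (j + k) := by
    intro m
    rw [hh₀def, Polynomial.finset_sum_coeff]
    by_cases hm : m ≤ d - k
    · rw [Finset.sum_eq_single m]
      · rw [Polynomial.coeff_monomial, if_pos rfl]
      · intro b _ hbm
        rw [Polynomial.coeff_monomial, if_neg hbm]
      · intro hmem
        exact absurd (Finset.mem_range.2 (by omega)) hmem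
    · rw [Finset.sum_eq_zero, eq_comm]
      · exact (f 0).coeff_eq_zero_of_natDegree_lt (by have := hfdeg 0; omega)
      · intro b hb
        have hbd := Finset.mem_range.1 hb
        rw [Polynomial.coeff_monomial, if_neg (by omega)]
  have hXh₀ : X ^ k * h₀ = f 0 := by
    ext m
    rw [Polynomial.coeff_X_pow_mul']
    split_ifs with h1
    · rw [h0coeff, Nat.sub_add_cancel h1]
    · rw [eq_comm]
      exact Polynomial.coeff_eq_zero_of_lt_natTrailingDegree (by omega)
  have hh₀dk : h₀.coeff (d - k) = 1 := by
    rw [h0coeff, Nat.sub_add_cancel (le_of_lt hkd), hf0d]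
  have hdh₀ : h₀.natDegree = d - k := by
    apply le_antisymm
    · apply Polynomial.natDegree_le_iff_coeff_eq_zero.2
      intro m hm
      rw [h0coeff]
      exact (f 0).coeff_eq_zero_of_natDegree_lt (by have := hfdeg 0; omega)
    · exact Polynomial.le_natDegree_of_ne_zero (by rw [hh₀dk]; exact one_ne_zero)
  have hmh₀ : h₀.Monic := by
    rw [Polynomial.Monic, Polynomial.leadingCoeff, hdh₀, hh₀dk]
  -- gradings
  have hfhom : ∀ n : ℕ, HHom r s (((n : ℕ) : ZMod r) + (s : ZMod r) * (d : ZMod r)) (f n) := by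
    intro n j hj
    rw [fcoeff] at hj
    by_cases h1 : j ≤ d ∧ r ∣ (n + s*(d-j))
    · have hdvd := h1.2
      have : ((n + s*(d-j) : ℕ) : ZMod r) = 0 := (ZMod.natCast_eq_zero_iff _ _).2 hdvd
      push_cast [Nat.cast_sub h1.1] at this
      linear_combination -this
    · rw [if_neg h1] at hj
      exact absurd rfl hj
  set δ : ZMod r := (s : ZMod r) * (d : ZMod r) - (s : ZMod r) * (k : ZMod r) with hδdef
  have hδ : HHom r s δ h₀ := by
    intro j hj
    rw [h0coeff] at hj
    have := hfhom 0 (j + k) hj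
    push_cast at this
    rw [hδdef]
    linear_combination this
  have hfhom' : ∀ n : ℕ, HHom r s (((n : ℕ) : ZMod r) +
      ((s : ZMod r) * (k : ZMod r) + δ)) (f n) := by
    intro n
    rw [show ((s : ZMod r) * (k : ZMod r) + δ) = (s : ZMod r) * (d : ZMod r) from by
      rw [hδdef]; ring]
    exact hfhom n
  -- Bezout
  have hu₀ : h₀.coeff 0 ≠ 0 := by
    rw [h0coeff, Nat.zero_add, hkdef]
    rw [← Polynomial.trailingCoeff]
    exact fun h => hf0ne (Polynomial.trailingCoeff_eq_zero.1 h)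
  have hcop1 : IsCoprime (X : Polynomial K) h₀ := by
    refine ⟨-(Polynomial.C (h₀.coeff 0)⁻¹ * h₀.divX), Polynomial.C (h₀.coeff 0)⁻¹, ?_⟩
    have hX := Polynomial.X_mul_divX_add h₀
    have : (Polynomial.C (h₀.coeff 0)⁻¹ : Polynomial K) * Polynomial.C (h₀.coeff 0) = 1 := by
      rw [← Polynomial.C_mul, inv_mul_cancel₀ hu₀, Polynomial.C_1]
    linear_combination (-(Polynomial.C (h₀.coeff 0)⁻¹)) * hX + this
  obtain ⟨P, Q, hPQ⟩ := (IsCoprime.pow_left (m := k) hcop1)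
  have spec := hseq_spec r s k d δ h₀ P Q f hk1 hkd hXh₀ hdh₀ hδ hPQ hfdeg hfd hfhom'
  set gs : ℕ → Polynomial K := fun n => (hseq r s k δ h₀ Q f n).1 with hgsdef
  set hss : ℕ → Polynomial K := fun n => (hseq r s k δ h₀ Q f n).2 with hhssdef
  have hg0 : gs 0 = X ^ k := by rw [hgsdef]; simp [hseq_zero]
  have hh0 : hss 0 = h₀ := by rw [hhssdef]; simp [hseq_zero]
  have gdeg : ∀ n : ℕ, (gs n).natDegree ≤ k := by
    intro n
    rcases Nat.eq_zero_or_pos n with rfl | hn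
    · rw [hg0, Polynomial.natDegree_X_pow]
    · exact le_of_lt ((spec n).2.2.1 hn)
  have hdeg : ∀ n : ℕ, (hss n).natDegree ≤ d - k := fun n => (spec n).2.2.2.1
  have gch : ∀ n j : ℕ, k < j → (gs n).coeff j = 0 := fun n j hj =>
    Polynomial.coeff_eq_zero_of_natDegree_lt (lt_of_le_of_lt (gdeg n) hj)
  have hch : ∀ n j : ℕ, d - k < j → (hss n).coeff j = 0 := fun n j hj =>
    Polynomial.coeff_eq_zero_of_natDegree_lt (lt_of_le_of_lt (hdeg n) hj)
  set Gc : ℕ → ℕ → K := fun j a =>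
    if s*(k-j) ≤ a*r then (gs (a*r - s*(k-j))).coeff j else 0 with hGcdef
  set Hc : ℕ → ℕ → K := fun j a =>
    if s*((d-k)-j) ≤ a*r then (hss (a*r - s*((d-k)-j))).coeff j else 0 with hHcdef
  set G : Polynomial (PowerSeries K) := ∑ j ∈ Finset.range (k+1),
    Polynomial.monomial j (PowerSeries.mk (Gc j)) with hGdef
  set H : Polynomial (PowerSeries K) := ∑ j ∈ Finset.range (d-k+1),
    Polynomial.monomial j (PowerSeries.mk (Hc j)) with hHdef
  have Gcoeff : ∀ j : ℕ, G.coeff j = PowerSeries.mk (Gc j) := by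
    intro m
    rw [hGdef, Polynomial.finset_sum_coeff]
    by_cases hm : m ≤ k
    · rw [Finset.sum_eq_single m]
      · rw [Polynomial.coeff_monomial, if_pos rfl]
      · intro b _ hbm
        rw [Polynomial.coeff_monomial, if_neg hbm]
      · intro hmem
        exact absurd (Finset.mem_range.2 (by omega)) hmem
    · rw [Finset.sum_eq_zero]
      · rw [eq_comm]
        ext a
        simp only [PowerSeries.coeff_mk, hGcdef, map_zero]
        split_ifs with h1
        · exact gch _ _ (by omega)
        · rfl
      · intro b hb
        have hbd := Finset.mem_range.1 hb
        rw [Polynomial.coeff_monomial, if_neg (by omega)]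
  have Hcoeff : ∀ j : ℕ, H.coeff j = PowerSeries.mk (Hc j) := by
    intro m
    rw [hHdef, Polynomial.finset_sum_coeff]
    by_cases hm : m ≤ d - k
    · rw [Finset.sum_eq_single m]
      · rw [Polynomial.coeff_monomial, if_pos rfl]
      · intro b _ hbm
        rw [Polynomial.coeff_monomial, if_neg hbm]
      · intro hmem
        exact absurd (Finset.mem_range.2 (by omega)) hmem
    · rw [Finset.sum_eq_zero]
      · rw [eq_comm]
        ext a
        simp only [PowerSeries.coeff_mk, hHcdef, map_zero]
        split_ifs with h1
        · exact hch _ _ (by omega)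
        · rfl
      ·  intro b hb
         have hbd := Finset.mem_range.1 hb
         rw [Polynomial.coeff_monomial, if_neg (by omega)]
  have hGk : G.coeff k = 1 := by
    rw [Gcoeff]
    ext a
    simp only [PowerSeries.coeff_mk, hGcdef]
    rw [Nat.sub_self, Nat.mul_zero, if_pos (Nat.zero_le _), Nat.sub_zero]
    rcases Nat.eq_zero_or_pos a with rfl | ha
    · rw [Nat.zero_mul, hg0, Polynomial.coeff_X_pow, if_pos rfl,
        PowerSeries.coeff_one, if_pos rfl]
    · rw [PowerSeries.coeff_one, if_neg (by omega)]
      apply Polynomial.coeff_eq_zero_of_natDegree_lt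
      exact (spec (a*r)).2.2.1 (by positivity)
  have hHdk : H.coeff (d - k) = 1 := by
    rw [Hcoeff]
    ext a
    simp only [PowerSeries.coeff_mk, hHcdef]
    rw [Nat.sub_self, Nat.mul_zero, if_pos (Nat.zero_le _), Nat.sub_zero]
    rcases Nat.eq_zero_or_pos a with rfl | ha
    · rw [Nat.zero_mul, hh0, hh₀dk, PowerSeries.coeff_one, if_pos rfl]
    · rw [PowerSeries.coeff_one, if_neg (by omega)]
      apply Polynomial.coeff_eq_zero_of_natDegree_lt
      exact (spec (a*r)).2.2.2.2.1 (by positivity)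
  have hGdeg : G.natDegree = k := by
    apply le_antisymm
    · apply Polynomial.natDegree_le_iff_coeff_eq_zero.2
      intro m hm
      rw [Gcoeff]
      ext a
      simp only [PowerSeries.coeff_mk, hGcdef, map_zero]
      split_ifs with h1
      · exact gch _ _ hm
      · rfl
    · exact Polynomial.le_natDegree_of_ne_zero (by rw [hGk]; exact one_ne_zero)
  have hHdeg : H.natDegree = d - k := by
    apply le_antisymm
    · apply Polynomial.natDegree_le_iff_coeff_eq_zero.2
      intro m hm
      rw [Hcoeff]
      ext a
      simp only [PowerSeries.coeff_mk, hHcdef, map_zero]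
      split_ifs with h1
      · exact hch _ _ hm
      · rfl
    · exact Polynomial.le_natDegree_of_ne_zero (by rw [hHdk]; exact one_ne_zero)
  have hFGH : F = G * H := by
    apply Polynomial.ext
    intro i
    apply PowerSeries.ext
    intro α
    have hterm : ∀ x ∈ Finset.HasAntidiagonal.antidiagonal i,
        (PowerSeries.coeff α) (G.coeff x.1 * H.coeff x.2)
        = ∑ y ∈ Finset.HasAntidiagonal.antidiagonal α, Gc x.1 y.1 * Hc x.2 y.2 := by
      intro x hx
      rw [Gcoeff, Hcoeff, PowerSeries.coeff_mul]
      exact Finset.sum_congr rfl fun y hy => by rw [PowerSeries.coeff_mk, PowerSeries.coeff_mk]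
    rw [Polynomial.coeff_mul, map_sum, Finset.sum_congr rfl hterm]
    by_cases hcase : s * (d - i) ≤ α * r
    · set N : ℕ := α * r - s * (d - i) with hNdef
      have hNr : N + s * (d - i) = α * r := by omega
      have hLHS : (PowerSeries.coeff α) (F.coeff i) = (f N).coeff i := by
        rcases le_or_gt i d with hid | hid
        · rw [fcoeff, if_pos ⟨hid, ⟨α, by rw [hNr]; exact Nat.mul_comm α r⟩⟩]
          rw [show (N + s * (d - i)) / r = α from by rw [hNr]; exact Nat.mul_div_cancel α hr]
        · rw [Polynomial.coeff_eq_zero_of_natDegree_lt (show F.natDegree < i by omega), map_zero,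
            fcoeff, if_neg (by omega)]
      rw [hLHS, ← (spec N).2.2.2.2.2, Polynomial.finset_sum_coeff,
        Finset.sum_congr rfl (fun m (_ : m ∈ Finset.range (N+1)) =>
          Polynomial.coeff_mul (gs m) (hss (N - m)) i),
        Finset.sum_comm]
      apply Finset.sum_congr rfl
      rintro ⟨j, j'⟩ hx
      have hjj' : j + j' = i := Finset.HasAntidiagonal.mem_antidiagonal.1 hx
      rw [Finset.Nat.sum_antidiagonal_eq_sum_range_succ_mk]
      simp only
      by_cases hjk : j ≤ k
      swap
      · rw [Finset.sum_eq_zero (fun m _ => by rw [gch _ _ (by omega), zero_mul]),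
          Finset.sum_eq_zero (fun a _ => ?_)]
        have : Gc j a = 0 := by
          simp only [hGcdef]
          split_ifs with h1
          · exact gch _ _ (by omega)
          · rfl
        rw [this, zero_mul]
      by_cases hj'k : j' ≤ d - k
      swap
      · rw [Finset.sum_eq_zero (fun m _ => by rw [hch _ _ (by omega), mul_zero]),
          Finset.sum_eq_zero (fun a _ => ?_)]
        have : Hc j' (α - a) = 0 := by
          simp only [hHcdef]
          split_ifs with h1
          · exact hch _ _ (by omega)
          · rfl
        rw [this, mul_zero]
      have hid : i ≤ d := by omega
      have e2 : s * (k - j) + s * ((d - k) - j') = s * (d - i) := by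
        rw [← Nat.mul_add]
        congr 1
        omega
      have hL : ∑ m ∈ Finset.range (N+1), (gs m).coeff j * (hss (N - m)).coeff j'
          = ∑ m ∈ (Finset.range (N+1)).filter (fun m => r ∣ m + s * (k - j)),
              (gs m).coeff j * (hss (N - m)).coeff j' := by
        rw [Finset.sum_filter_of_ne]
        intro m _ hne0
        have hgne : (gs m).coeff j ≠ 0 := fun h => hne0 (by rw [h, zero_mul])
        have hom := (spec m).1 j hgne
        have hz : ((m + s * (k - j) : ℕ) : ZMod r) = 0 := by
          push_cast [Nat.cast_sub hjk]
          linear_combination -hom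
        exact (ZMod.natCast_eq_zero_iff _ _).1 hz
      have hR : ∑ a ∈ Finset.range (α+1), Gc j a * Hc j' (α - a)
          = ∑ a ∈ (Finset.range (α+1)).filter
              (fun a => s * (k - j) ≤ a * r ∧ s * ((d - k) - j') ≤ (α - a) * r),
              Gc j a * Hc j' (α - a) := by
        rw [Finset.sum_filter_of_ne]
        intro a _ hne0
        have hgne : Gc j a ≠ 0 := fun h => hne0 (by rw [h, zero_mul])
        have hhne : Hc j' (α - a) ≠ 0 := fun h => hne0 (by rw [h, mul_zero])
        constructor
        · by_contra hcon
          exact hgne (by simp only [hGcdef]; rw [if_neg hcon])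
        · by_contra hcon
          exact hhne (by simp only [hHcdef]; rw [if_neg hcon])
      rw [hL, hR]
      apply Finset.sum_bij' (i := fun m (_ : m ∈ (Finset.range (N+1)).filter
            (fun m => r ∣ m + s * (k - j))) => (m + s * (k - j)) / r)
        (j := fun a (_ : a ∈ (Finset.range (α+1)).filter
            (fun a => s * (k - j) ≤ a * r ∧ s * ((d - k) - j') ≤ (α - a) * r)) =>
              a * r - s * (k - j))
      · -- hi : maps into target
        intro m hm
        rw [Finset.mem_filter] at hm ⊢
        obtain ⟨hmr, hdvd⟩ := hm
        rw [Finset.mem_range] at hmr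
        have hq : ((m + s * (k - j)) / r) * r = m + s * (k - j) := Nat.div_mul_cancel hdvd
        have hle : ((m + s * (k - j)) / r) * r ≤ α * r := by omega
        have ha : (m + s * (k - j)) / r ≤ α := Nat.le_of_mul_le_mul_right hle hr
        refine ⟨Finset.mem_range.2 (by omega), by omega, ?_⟩
        have e1 : (α - (m + s * (k - j)) / r) * r = α * r - ((m + s * (k - j)) / r) * r :=
          Nat.sub_mul _ _ _
        omega
      · -- hj : inverse maps into source
        intro a ha
        rw [Finset.mem_filter] at ha ⊢
        obtain ⟨har, hc1, hc2⟩ := ha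
        rw [Finset.mem_range] at har
        have e1 : (α - a) * r = α * r - a * r := Nat.sub_mul _ _ _
        have har' : a * r ≤ α * r := Nat.mul_le_mul_right r (by omega)
        refine ⟨Finset.mem_range.2 (by omega), ?_⟩
        rw [Nat.sub_add_cancel hc1]
        exact dvd_mul_left r a
      · -- left_inv
        intro m hm
        rw [Finset.mem_filter] at hm
        have hq : ((m + s * (k - j)) / r) * r = m + s * (k - j) := Nat.div_mul_cancel hm.2
        omega
      · -- right_inv
        intro a ha
        rw [Finset.mem_filter] at ha
        rw [Nat.sub_add_cancel ha.2.1]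
        exact Nat.mul_div_cancel a hr
      · -- values agree
        intro m hm
        rw [Finset.mem_filter] at hm
        obtain ⟨hmr, hdvd⟩ := hm
        rw [Finset.mem_range] at hmr
        have hq : ((m + s * (k - j)) / r) * r = m + s * (k - j) := Nat.div_mul_cancel hdvd
        have hle : ((m + s * (k - j)) / r) * r ≤ α * r := by omega
        have ha : (m + s * (k - j)) / r ≤ α := Nat.le_of_mul_le_mul_right hle hr
        have e1 : (α - (m + s * (k - j)) / r) * r = α * r - ((m + s * (k - j)) / r) * r :=
          Nat.sub_mul _ _ _
        have ea : ((m + s * (k - j)) / r) * r - s * (k - j) = m := by omega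
        have eb : (α - (m + s * (k - j)) / r) * r - s * ((d - k) - j') = N - m := by omega
        have hcc1 : s * (k - j) ≤ ((m + s * (k - j)) / r) * r := by omega
        have hcc2 : s * ((d - k) - j') ≤ (α - (m + s * (k - j)) / r) * r := by omega
        simp only [hGcdef, hHcdef]
        rw [if_pos hcc1, if_pos hcc2, ea, eb]
    · push_neg at hcase
      rw [hlow i α (by omega)]
      rw [eq_comm]
      apply Finset.sum_eq_zero
      rintro ⟨j, j'⟩ hx
      have hjj' : j + j' = i := Finset.HasAntidiagonal.mem_antidiagonal.1 hx
      apply Finset.sum_eq_zero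
      rintro ⟨a, a'⟩ hy
      have haa' : a + a' = α := Finset.HasAntidiagonal.mem_antidiagonal.1 hy
      simp only
      by_contra hne0
      have hgne : Gc j a ≠ 0 := fun h => hne0 (by rw [h, zero_mul])
      have hhne : Hc j' a' ≠ 0 := fun h => hne0 (by rw [h, mul_zero])
      have hjk : j ≤ k := by
        by_contra hcon
        refine hgne ?_
        simp only [hGcdef]
        split_ifs with h1
        · exact gch _ _ (by omega)
        · rfl
      have hj'k : j' ≤ d - k := by
        by_contra hcon
        refine hhne ?_
        simp only [hHcdef]
        split_ifs with h1
        · exact hch _ _ (by omega)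
        · rfl
      have hc1 : s * (k - j) ≤ a * r := by
        by_contra hcon
        exact hgne (by simp only [hGcdef]; rw [if_neg hcon])
      have hc2 : s * ((d - k) - j') ≤ a' * r := by
        by_contra hcon
        exact hhne (by simp only [hHcdef]; rw [if_neg hcon])
      have hid : i ≤ d := by omega
      have e2 : s * (k - j) + s * ((d - k) - j') = s * (d - i) := by
        rw [← Nat.mul_add]
        congr 1
        omega
      have e3 : a * r + a' * r = α * r := by rw [← Nat.add_mul, haa']
      omega
  intro hirr
  rcases hirr.isUnit_or_isUnit hFGH with hu | hu
  · have := Polynomial.natDegree_eq_zero_of_isUnit hu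
    omega
  · have := Polynomial.natDegree_eq_zero_of_isUnit hu
    omega

end NPAux


open Polynomial PowerSeries in
/-- If `F ∈ K[[x]][y]` is monic and irreducible, then its Newton polygon
is straight: writing `d = deg F` and letting `i₀` be the smallest index with nonzero
coefficient, every point `(i, val (a_i))` of the Newton diagram lies on or above the
segment joining `(i₀, val (a_{i₀}))` and `(d, 0)`, i.e.
`(d - i₀) * val (a_i) ≥ (d - i) * val (a_{i₀})` whenever `a_i ≠ 0`. -/
theorem newton_polygon_straight_of_irreducible {K : Type*} [Field K]
    (F : Polynomial (PowerSeries K)) (hF : F.Monic) (hirr : Irreducible F)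
    (d : ℕ) (hdeg : F.natDegree = d)
    (i₀ : ℕ) (hi₀ : F.coeff i₀ ≠ 0) (hmin : ∀ j < i₀, F.coeff j = 0) :
    ∀ i, F.coeff i ≠ 0 →
      ((d - i : ℕ) : ℕ∞) * (F.coeff i₀).order ≤
        ((d - i₀ : ℕ) : ℕ∞) * (F.coeff i).order := by
  intro i hi
  have hd1 : 0 < d := by
    rcases Nat.eq_zero_or_pos d with h0 | h
    · exfalso
      have : F = 1 := hF.natDegree_eq_zero.1 (by omega)
      exact hirr.not_isUnit (this ▸ isUnit_one)
    · exact h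
  have hiled : i ≤ d := hdeg ▸ Polynomial.le_natDegree_of_ne_zero hi
  have hi₀led : i₀ ≤ d := hdeg ▸ Polynomial.le_natDegree_of_ne_zero hi₀
  by_cases hi₀0 : i₀ = 0
  swap
  · -- degenerate case: `y` divides `F`, so `F = y` and everything is trivial
    have h1 : (0:ℕ) < i₀ := Nat.pos_of_ne_zero hi₀0
    have hXdvd : (Polynomial.X : Polynomial (PowerSeries K)) ∣ F :=
      Polynomial.X_dvd_iff.2 (hmin 0 h1)
    obtain ⟨g, hg⟩ := hXdvd
    have hgu : IsUnit g := (hirr.isUnit_or_isUnit hg).resolve_left Polynomial.not_isUnit_X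
    have hgd : g.natDegree = 0 := Polynomial.natDegree_eq_zero_of_isUnit hgu
    have hg0 : g ≠ 0 := fun h => hF.ne_zero (by rw [hg, h, mul_zero])
    have hdeq : d = 1 := by
      rw [← hdeg, hg, Polynomial.natDegree_mul Polynomial.X_ne_zero hg0,
        Polynomial.natDegree_X, hgd]
    have hi₀1 : i₀ = 1 := by omega
    have hii : ¬ i < i₀ := fun hlt => hi (hmin i hlt)
    have hi1 : i = 1 := by omega
    rw [hi1, hi₀1, hdeq]
  · -- main case : i₀ = 0
    subst hi₀0
    rcases eq_or_ne i d with rfl | hid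
    · rw [Nat.sub_self, Nat.cast_zero, zero_mul]
      exact zero_le
    have hidlt : i < d := lt_of_le_of_ne hiled hid
    by_contra hcon
    rw [not_le] at hcon
    -- extract natural number orders
    have ho0 : (F.coeff 0).order ≠ ⊤ := fun h => hi₀ (PowerSeries.order_eq_top.1 h)
    have hoi : (F.coeff i).order ≠ ⊤ := fun h => hi (PowerSeries.order_eq_top.1 h)
    set c : ℕ := (F.coeff 0).order.toNat with hcdef
    set m : ℕ := (F.coeff i).order.toNat with hmdef
    have hc : (F.coeff 0).order = (c : ℕ∞) := (ENat.coe_toNat ho0).symm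
    have hm : (F.coeff i).order = (m : ℕ∞) := (ENat.coe_toNat hoi).symm
    rw [hc, hm, Nat.sub_zero, ← Nat.cast_mul, ← Nat.cast_mul, Nat.cast_lt] at hcon
    -- hcon : d * m < (d - i) * c
    -- choose the minimizing index i₁
    classical
    set T : Finset ℕ := (Finset.range d).filter (fun n => F.coeff n ≠ 0) with hTdef
    have hiT : i ∈ T := Finset.mem_filter.2 ⟨Finset.mem_range.2 hidlt, hi⟩
    obtain ⟨i₁, hi₁T, hmin₁⟩ := Finset.exists_min_image T
      (fun n => (((F.coeff n).order.toNat : ℚ)) / ((d - n : ℕ) : ℚ)) ⟨i, hiT⟩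
    have hi₁d : i₁ < d := Finset.mem_range.1 (Finset.mem_filter.1 hi₁T).1
    have hi₁ne : F.coeff i₁ ≠ 0 := (Finset.mem_filter.1 hi₁T).2
    have hoi₁ : (F.coeff i₁).order ≠ ⊤ := fun h => hi₁ne (PowerSeries.order_eq_top.1 h)
    set s : ℕ := (F.coeff i₁).order.toNat with hsdef
    have hs : (F.coeff i₁).order = (s : ℕ∞) := (ENat.coe_toNat hoi₁).symm
    -- cross-multiplied minimality
    have hcross : ∀ n, n < d → F.coeff n ≠ 0 →
        s * (d - n) ≤ (F.coeff n).order.toNat * (d - i₁) := by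
      intro n hnd hn0
      have hnT : n ∈ T := Finset.mem_filter.2 ⟨Finset.mem_range.2 hnd, hn0⟩
      have hrat := hmin₁ n hnT
      rw [div_le_div_iff₀ (Nat.cast_pos.2 (show 0 < d - i₁ by omega)) (Nat.cast_pos.2 (show 0 < d - n by omega))] at hrat
      have := hrat
      rw [show ((F.coeff i₁).order.toNat : ℚ) = (s : ℚ) from by rw [hsdef]] at this
      exact_mod_cast this
    have hne : PowerSeries.coeff s (F.coeff i₁) ≠ 0 :=
      (PowerSeries.order_eq_nat.1 hs).1
    have hlow : ∀ i' a : ℕ, a * (d - i₁) < s * (d - i') →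
        PowerSeries.coeff a (F.coeff i') = 0 := by
      intro i' a hlt
      rcases eq_or_ne (F.coeff i') 0 with h0 | h0
      · rw [h0, map_zero]
      have hi'd : i' < d := by
        by_contra hcon'
        push_neg at hcon'
        rw [show d - i' = 0 from by omega, Nat.mul_zero] at hlt
        omega
      have hcr := hcross i' hi'd h0
      have ham : a < (F.coeff i').order.toNat := by
        have hr1 : (0:ℕ) < d - i₁ := by omega
        by_contra hcon'
        push_neg at hcon'
        have : (F.coeff i').order.toNat * (d - i₁) ≤ a * (d - i₁) :=
          Nat.mul_le_mul_right _ hcon'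
        omega
      apply PowerSeries.coeff_of_lt_order
      have ho' : (F.coeff i').order = ((F.coeff i').order.toNat : ℕ∞) :=
        (ENat.coe_toNat (fun h => h0 (PowerSeries.order_eq_top.1 h))).symm
      rw [ho']
      exact_mod_cast ham
    have hsd : s * d < c * (d - i₁) := by
      have h1 : s * (d - i) ≤ m * (d - i₁) := hcross i hidlt hi
      -- hcon : d * m < (d - i) * c
      have h2 : s * d * (d - i) ≤ m * (d - i₁) * d := by
        calc s * d * (d - i) = s * (d - i) * d := by ring
        _ ≤ m * (d - i₁) * d := Nat.mul_le_mul_right d h1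
      have h3 : m * (d - i₁) * d = d * m * (d - i₁) := by ring
      have h4 : d * m * (d - i₁) < (d - i) * c * (d - i₁) :=
        (Nat.mul_lt_mul_right (show 0 < d - i₁ by omega)).2 hcon
      have h5 : (d - i) * c * (d - i₁) = c * (d - i₁) * (d - i) := by ring
      have h6 : s * d * (d - i) < c * (d - i₁) * (d - i) := by omega
      exact lt_of_mul_lt_mul_right h6 (Nat.zero_le _)
    have hs0 : ∀ a : ℕ, a * (d - i₁) ≤ s * d → PowerSeries.coeff a (F.coeff 0) = 0 := by
      intro a ha
      have hac : a < c := by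
        by_contra hcon'
        push_neg at hcon'
        have : c * (d - i₁) ≤ a * (d - i₁) := Nat.mul_le_mul_right _ hcon'
        omega
      apply PowerSeries.coeff_of_lt_order
      rw [hc]
      exact_mod_cast hac
    exact (NPAux.key F hF d i₁ s hdeg hd1 hi₁d hne hlow hs0) hirr
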